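/- Single-receiver MAC upper bound on successive-decoding rates (Eq. 26): Let h, p₁, …, p_M ∈ ℂ^N, let σ² > 0 and P > 0, and suppose Σ_{m=1}^M ‖p_m‖² ≤ P. For m ∈ {1,…,M} define γ_m := |hᴴ p_m|² / (Σ_{j=m+1}^{M} |hᴴ p_j|² + σ²). Then min_{m∈{1,…,M}} log₂(1 + γ_m) ≤ (1/M) · log₂(1 + P‖h‖²/σ²). -/

import Mathlib

open scoped BigOperators

/-- `hᴴ p`: the effective scalar channel seen through beamformer `p`. -/
noncomputable def hinner {N : ℕ} (h p : Fin N → ℂ) : ℂ := ∑ i, star (h i) * p i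

lemma hinner_sq_le {N : ℕ} (h q : Fin N → ℂ) :
    ‖hinner h q‖ ^ 2 ≤ (∑ i, ‖h i‖ ^ 2) * (∑ i, ‖q i‖ ^ 2) := by
  have h1 : hinner h q = inner (𝕜 := ℂ) ((WithLp.equiv 2 (Fin N → ℂ)).symm h) ((WithLp.equiv 2 (Fin N → ℂ)).symm q) := by
    simp [hinner, PiLp.inner_apply, RCLike.inner_apply, RCLike.star_def]
    exact Finset.sum_congr rfl fun _ _ => mul_comm _ _
  have h2 := norm_inner_le_norm (𝕜 := ℂ) ((WithLp.equiv 2 (Fin N → ℂ)).symm h) ((WithLp.equiv 2 (Fin N → ℂ)).symm q)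
  rw [← h1] at h2
  have h3 : ‖((WithLp.equiv 2 (Fin N → ℂ)).symm h)‖ ^ 2 = ∑ i, ‖h i‖ ^ 2 := by
    rw [EuclideanSpace.norm_eq, Real.sq_sqrt (Finset.sum_nonneg fun i _ => sq_nonneg _)]
    simp
  have h4 : ‖((WithLp.equiv 2 (Fin N → ℂ)).symm q)‖ ^ 2 = ∑ i, ‖q i‖ ^ 2 := by
    rw [EuclideanSpace.norm_eq, Real.sq_sqrt (Finset.sum_nonneg fun i _ => sq_nonneg _)]
    simp
  calc ‖hinner h q‖ ^ 2 ≤ (‖((WithLp.equiv 2 (Fin N → ℂ)).symm h)‖ * ‖((WithLp.equiv 2 (Fin N → ℂ)).symm q)‖) ^ 2 := by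
        apply pow_le_pow_left₀ (norm_nonneg _) h2
    _ = (∑ i, ‖h i‖ ^ 2) * (∑ i, ‖q i‖ ^ 2) := by rw [mul_pow, h3, h4]

/-- **Single-receiver MAC upper bound on successive-decoding rates (Eq. 26).**
For a single receiver with channel `h` decoding `M` superposed streams with beamformers
`p₁, …, p_M` (total power at most `P`) in order, where
`γ_m = |hᴴ p_m|² / (Σ_{j>m} |hᴴ p_j|² + σ²)`, the minimum stream rate is at most
`(1/M)·log₂(1 + P‖h‖²/σ²)`. -/
theorem stmt10 (N M : ℕ) (hM : 1 ≤ M) (h : Fin N → ℂ) (p : Fin M → Fin N → ℂ)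
    (σ2 P : ℝ) (hσ : 0 < σ2) (hP : 0 < P)
    (hpow : ∑ m, ∑ i, ‖p m i‖ ^ 2 ≤ P) :
    (⨅ m : Fin M, Real.logb 2 (1 + ‖hinner h (p m)‖ ^ 2 /
        ((∑ j ∈ Finset.univ.filter (fun j => m < j), ‖hinner h (p j)‖ ^ 2) + σ2)))
      ≤ (1 / (M : ℝ)) * Real.logb 2 (1 + P * (∑ i, ‖h i‖ ^ 2) / σ2) := by
  set a : Fin M → ℝ := fun m => ‖hinner h (p m)‖ ^ 2 with ha
  set f : ℕ → ℝ := fun k =>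
    (∑ j ∈ Finset.univ.filter (fun j : Fin M => k ≤ (j : ℕ)), a j) + σ2 with hf
  have ha0 : ∀ m, 0 ≤ a m := fun m => sq_nonneg _
  have hfpos : ∀ k, 0 < f k := fun k =>
    add_pos_of_nonneg_of_pos (Finset.sum_nonneg fun j _ => ha0 j) hσ
  have hfM : f M = σ2 := by
    have : (Finset.univ.filter (fun j : Fin M => M ≤ (j : ℕ))) = ∅ := by
      ext j; simp [Nat.not_le.mpr j.isLt]
    simp [hf, this]
  have hstep : ∀ m : Fin M, f m.val = a m + f (m.val + 1) := by
    intro m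
    have hins : (Finset.univ.filter (fun j : Fin M => m.val ≤ (j : ℕ)))
        = insert m (Finset.univ.filter (fun j : Fin M => m.val + 1 ≤ (j : ℕ))) := by
      ext j
      simp only [Finset.mem_filter, Finset.mem_univ, true_and, Finset.mem_insert]
      constructor
      · intro hj
        rcases Nat.eq_or_lt_of_le hj with hj' | hj'
        · exact Or.inl (Fin.ext hj'.symm)
        · exact Or.inr hj'
      · rintro (rfl | hj)
        · exact le_refl _
        · omega
    have hnotmem : m ∉ Finset.univ.filter (fun j : Fin M => m.val + 1 ≤ (j : ℕ)) := by
      simp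
    rw [hf]
    simp only
    rw [hins, Finset.sum_insert hnotmem]
    ring
  set g : Fin M → ℝ := fun m => Real.logb 2 (1 + a m /
        ((∑ j ∈ Finset.univ.filter (fun j => m < j), a j) + σ2)) with hg
  have hgeq : ∀ m : Fin M, g m = Real.logb 2 (f m.val) - Real.logb 2 (f (m.val + 1)) := by
    intro m
    have hfilt : (Finset.univ.filter (fun j : Fin M => m < j))
        = Finset.univ.filter (fun j : Fin M => m.val + 1 ≤ (j : ℕ)) := by
      ext j
      simp only [Finset.mem_filter, Finset.mem_univ, true_and, Fin.lt_def]; omega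
    have hS : (∑ j ∈ Finset.univ.filter (fun j => m < j), a j) + σ2 = f (m.val + 1) := by
      rw [hf, hfilt]
    rw [hg]
    simp only
    rw [hS]
    have h1 : 1 + a m / f (m.val + 1) = f m.val / f (m.val + 1) := by
      rw [hstep m]
      rw [add_div, div_self (ne_of_gt (hfpos _))]
      ring
    rw [h1, Real.logb_div (ne_of_gt (hfpos _)) (ne_of_gt (hfpos _))]
  have hsum : ∑ m : Fin M, g m = Real.logb 2 (f 0) - Real.logb 2 (f M) := by
    rw [Finset.sum_congr rfl fun m _ => hgeq m]
    rw [Fin.sum_univ_eq_sum_range (fun k => Real.logb 2 (f k) - Real.logb 2 (f (k + 1)))]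
    exact Finset.sum_range_sub' (fun k => Real.logb 2 (f k)) M
  have hMpos : (0 : ℝ) < (M : ℝ) := by exact_mod_cast hM
  have hinf_le : ∀ m : Fin M, (⨅ m', g m') ≤ g m := fun m =>
    ciInf_le (Set.Finite.bddBelow (Set.finite_range g)) m
  have hMmul : (M : ℝ) * (⨅ m', g m') ≤ ∑ m, g m := by
    calc (M : ℝ) * (⨅ m', g m') = ∑ _m : Fin M, (⨅ m', g m') := by
          rw [Finset.sum_const, Finset.card_univ, Fintype.card_fin, nsmul_eq_mul]
      _ ≤ ∑ m, g m := Finset.sum_le_sum fun m _ => hinf_le m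
  -- bound the telescoped sum
  have hH0 : 0 ≤ ∑ i, ‖h i‖ ^ 2 := Finset.sum_nonneg fun i _ => sq_nonneg _
  have hatot : ∑ m, a m ≤ P * (∑ i, ‖h i‖ ^ 2) := by
    calc ∑ m, a m ≤ ∑ m, (∑ i, ‖h i‖ ^ 2) * (∑ i, ‖p m i‖ ^ 2) :=
          Finset.sum_le_sum fun m _ => hinner_sq_le h (p m)
      _ = (∑ i, ‖h i‖ ^ 2) * ∑ m, ∑ i, ‖p m i‖ ^ 2 := by rw [Finset.mul_sum]
      _ ≤ (∑ i, ‖h i‖ ^ 2) * P := by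
          apply mul_le_mul_of_nonneg_left hpow hH0
      _ = P * (∑ i, ‖h i‖ ^ 2) := mul_comm _ _
  have hf0 : f 0 = (∑ m, a m) + σ2 := by
    rw [hf]; simp
  have hlog_le : Real.logb 2 (f 0) - Real.logb 2 (f M) ≤
      Real.logb 2 (1 + P * (∑ i, ‖h i‖ ^ 2) / σ2) := by
    rw [hfM, ← Real.logb_div (ne_of_gt (hfpos 0)) (ne_of_gt hσ)]
    apply Real.logb_le_logb_of_le one_lt_two (div_pos (hfpos 0) hσ)
    rw [hf0]
    rw [div_le_iff₀ hσ]
    have : (1 + P * (∑ i, ‖h i‖ ^ 2) / σ2) * σ2 = σ2 + P * (∑ i, ‖h i‖ ^ 2) := by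
      field_simp
    rw [this]
    linarith [hatot]
  have : (M : ℝ) * (⨅ m', g m') ≤ Real.logb 2 (1 + P * (∑ i, ‖h i‖ ^ 2) / σ2) := by
    calc (M : ℝ) * (⨅ m', g m') ≤ ∑ m, g m := hMmul
      _ = Real.logb 2 (f 0) - Real.logb 2 (f M) := hsum
      _ ≤ _ := hlog_le
  have hfinal : (⨅ m', g m') ≤ (1 / (M : ℝ)) * Real.logb 2 (1 + P * (∑ i, ‖h i‖ ^ 2) / σ2) := by
    rw [one_div, ← div_eq_inv_mul, le_div_iff₀ hMpos]
    linarith [this]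
  exact hfinal
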